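/- Fix a positive integer m, let p(k,m) = #{x ∈ ℤ^m : x_1 ≥ x_2 ≥ … ≥ x_m ≥ 0 and x_1 + … + x_m = k}, and let p_0,…,p_{L−1} (with L = lcm(1,…,m)) be polynomials such that p(k,m) = p_{k mod L}(k) for all positive integers k. Then for every positive integer k, (−1)^{m−1} · p_{(−k) mod L}(−k) = #{x ∈ ℤ^m : x_1 > x_2 > … > x_m > 0 and x_1 + … + x_m = k}, i.e., up to sign, the quasipolynomial p(·,m) evaluated at −k counts partitions of k into exactly m distinct parts. -/

import Mathlib

open Polynomial

/-- number of partitions of `k` into at most `m` parts -/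
noncomputable def Acount (m : ℕ) (k : ℤ) : ℕ :=
  Set.ncard {x : Fin m → ℤ |
    (∀ i j : Fin m, i ≤ j → x j ≤ x i) ∧ (∀ i, 0 ≤ x i) ∧ ∑ i, x i = k}

/-- number of partitions of `k` into exactly `m` distinct parts -/
noncomputable def Bcount (m : ℕ) (k : ℤ) : ℕ :=
  Set.ncard {x : Fin m → ℤ |
    (∀ i j : Fin m, i < j → x j < x i) ∧ (∀ i, 0 < x i) ∧ ∑ i, x i = k}

lemma finite_nonneg_sum (m : ℕ) (k : ℤ) :
    {x : Fin m → ℤ | (∀ i, 0 ≤ x i) ∧ ∑ i, x i = k}.Finite := by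
  have h : {x : Fin m → ℤ | (∀ i, 0 ≤ x i) ∧ ∑ i, x i = k} ⊆
      Set.pi Set.univ (fun _ : Fin m => Set.Icc (0:ℤ) k) := by
    rintro x ⟨hx0, hxs⟩ i _
    refine ⟨hx0 i, ?_⟩
    rw [← hxs]
    exact Finset.single_le_sum (fun j _ => hx0 j) (Finset.mem_univ i)
  exact Set.Finite.subset (Set.Finite.pi (fun _ => Set.finite_Icc 0 k)) h

lemma aset_finite (m : ℕ) (k : ℤ) :
    {x : Fin m → ℤ |
      (∀ i j : Fin m, i ≤ j → x j ≤ x i) ∧ (∀ i, 0 ≤ x i) ∧ ∑ i, x i = k}.Finite :=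
  (finite_nonneg_sum m k).subset (fun x hx => ⟨hx.2.1, hx.2.2⟩)

lemma bset_finite (m : ℕ) (k : ℤ) :
    {x : Fin m → ℤ |
      (∀ i j : Fin m, i < j → x j < x i) ∧ (∀ i, 0 < x i) ∧ ∑ i, x i = k}.Finite :=
  (finite_nonneg_sum m k).subset (fun x hx => ⟨fun i => (hx.2.1 i).le, hx.2.2⟩)

lemma Acount_zero (k : ℤ) : Acount 0 k = if k = 0 then 1 else 0 := by
  unfold Acount
  split_ifs with h
  · subst h
    have hset : {x : Fin 0 → ℤ |
        (∀ i j : Fin 0, i ≤ j → x j ≤ x i) ∧ (∀ i, 0 ≤ x i) ∧ ∑ i, x i = (0:ℤ)} =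
        {fun _ : Fin 0 => (0:ℤ)} := by
      ext x
      simp [Subsingleton.elim x (fun _ : Fin 0 => (0:ℤ))]
    rw [hset, Set.ncard_singleton]
  · have hset : {x : Fin 0 → ℤ |
        (∀ i j : Fin 0, i ≤ j → x j ≤ x i) ∧ (∀ i, 0 ≤ x i) ∧ ∑ i, x i = k} =
        (∅ : Set (Fin 0 → ℤ)) := by
      ext x
      simp only [Set.mem_setOf_eq, Set.mem_empty_iff_false, iff_false]
      rintro ⟨-, -, hs⟩
      simp at hs
      exact h hs.symm
    rw [hset, Set.ncard_empty]

lemma Acount_neg {m : ℕ} {k : ℤ} (hk : k < 0) : Acount m k = 0 := by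
  unfold Acount
  rw [show {x : Fin m → ℤ |
      (∀ i j : Fin m, i ≤ j → x j ≤ x i) ∧ (∀ i, 0 ≤ x i) ∧ ∑ i, x i = k} =
      (∅ : Set (Fin m → ℤ)) from ?_, Set.ncard_empty]
  ext x
  simp only [Set.mem_setOf_eq, Set.mem_empty_iff_false, iff_false]
  rintro ⟨-, h0, hs⟩
  have : (0:ℤ) ≤ ∑ i, x i := Finset.sum_nonneg (fun i _ => h0 i)
  omega

lemma Bcount_nonpos {m : ℕ} (hm : 0 < m) {k : ℤ} (hk : k ≤ 0) : Bcount m k = 0 := by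
  unfold Bcount
  rw [show {x : Fin m → ℤ |
      (∀ i j : Fin m, i < j → x j < x i) ∧ (∀ i, 0 < x i) ∧ ∑ i, x i = k} =
      (∅ : Set (Fin m → ℤ)) from ?_, Set.ncard_empty]
  ext x
  simp only [Set.mem_setOf_eq, Set.mem_empty_iff_false, iff_false]
  rintro ⟨-, h0, hs⟩
  have h1 : ∀ i ∈ Finset.univ, (1:ℤ) ≤ x i := fun i _ => h0 i
  have := Finset.sum_le_sum h1
  simp at this
  omega

lemma Acount_one {n : ℤ} (hn : 0 ≤ n) : Acount 1 n = 1 := by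
  unfold Acount
  rw [show {x : Fin 1 → ℤ |
      (∀ i j : Fin 1, i ≤ j → x j ≤ x i) ∧ (∀ i, 0 ≤ x i) ∧ ∑ i, x i = n} =
      {fun _ : Fin 1 => n} from ?_, Set.ncard_singleton]
  ext x
  constructor
  · rintro ⟨-, -, hs⟩
    rw [Fin.sum_univ_one] at hs
    funext i
    rw [Subsingleton.elim i 0, hs]
  · rintro rfl
    refine ⟨fun i j _ => le_of_eq (by rw [Subsingleton.elim i j]), fun _ => hn, ?_⟩
    simp

lemma Bcount_one {k : ℤ} (hk : 1 ≤ k) : Bcount 1 k = 1 := by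
  unfold Bcount
  rw [show {x : Fin 1 → ℤ |
      (∀ i j : Fin 1, i < j → x j < x i) ∧ (∀ i, 0 < x i) ∧ ∑ i, x i = k} =
      {fun _ : Fin 1 => k} from ?_, Set.ncard_singleton]
  ext x
  constructor
  · rintro ⟨-, -, hs⟩
    rw [Fin.sum_univ_one] at hs
    funext i
    rw [Subsingleton.elim i 0, hs]
  · rintro rfl
    refine ⟨fun i j hij => absurd (Subsingleton.elim i j) hij.ne, fun i => by show (0:ℤ) < k; omega, ?_⟩
    simp


/-- extend a tuple by a last entry -/
def extLast {m : ℕ} (c : ℤ) (y : Fin m → ℤ) : Fin (m+1) → ℤ := Fin.snoc y c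

@[simp] lemma extLast_castSucc {m : ℕ} (c : ℤ) (y : Fin m → ℤ) (i : Fin m) :
    extLast c y (Fin.castSucc i) = y i := by simp [extLast]

@[simp] lemma extLast_last {m : ℕ} (c : ℤ) (y : Fin m → ℤ) :
    extLast c y (Fin.last m) = c := by simp [extLast]

lemma extLast_inj {m : ℕ} (c : ℤ) : Function.Injective (extLast (m := m) c) := by
  intro y y' h
  funext i
  have := congrFun h (Fin.castSucc i)
  simpa using this

lemma extLast_sum {m : ℕ} (c : ℤ) (y : Fin m → ℤ) :
    ∑ i, extLast c y i = (∑ i, y i) + c := by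
  rw [Fin.sum_univ_castSucc]
  simp

lemma eq_extLast {m : ℕ} (x : Fin (m+1) → ℤ) : x = extLast (x (Fin.last m)) (Fin.init x) :=
  (Fin.snoc_init_self x).symm

/-- add one to each entry -/
def addOne {m : ℕ} (y : Fin m → ℤ) : Fin m → ℤ := fun i => y i + 1

@[simp] lemma addOne_apply {m : ℕ} (y : Fin m → ℤ) (i : Fin m) : addOne y i = y i + 1 := rfl

lemma addOne_inj {m : ℕ} : Function.Injective (addOne (m := m)) := by
  intro y y' h
  funext i
  have := congrFun h i
  simp only [addOne_apply] at this
  omega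

lemma addOne_sum {m : ℕ} (y : Fin m → ℤ) : ∑ i, addOne y i = (∑ i, y i) + m := by
  simp [addOne, Finset.sum_add_distrib]

lemma Acount_rec (m : ℕ) (k : ℤ) :
    Acount (m+1) k = Acount m k + Acount (m+1) (k - (m+1)) := by
  classical
  set S : Set (Fin (m+1) → ℤ) := {x |
    (∀ i j : Fin (m+1), i ≤ j → x j ≤ x i) ∧ (∀ i, 0 ≤ x i) ∧ ∑ i, x i = k} with hS
  set S0 : Set (Fin (m+1) → ℤ) := {x ∈ S | x (Fin.last m) = 0} with hS0
  set S1 : Set (Fin (m+1) → ℤ) := {x ∈ S | 1 ≤ x (Fin.last m)} with hS1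
  have hfin : S.Finite := aset_finite (m+1) k
  have hunion : S = S0 ∪ S1 := by
    ext x
    simp only [hS0, hS1, Set.mem_union, Set.mem_setOf_eq]
    constructor
    · intro hx
      have := hx.2.1 (Fin.last m)
      by_cases h : x (Fin.last m) = 0
      · exact Or.inl ⟨hx, h⟩
      · exact Or.inr ⟨hx, by omega⟩
    · rintro (h | h) <;> exact h.1
  have hdisj : Disjoint S0 S1 := by
    rw [Set.disjoint_left]
    rintro x ⟨-, h0⟩ ⟨-, h1⟩
    omega
  have himg0 : extLast 0 '' {y : Fin m → ℤ |
      (∀ i j : Fin m, i ≤ j → y j ≤ y i) ∧ (∀ i, 0 ≤ y i) ∧ ∑ i, y i = k} = S0 := by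
    ext x
    simp only [Set.mem_image, Set.mem_setOf_eq, hS0, hS]
    constructor
    · rintro ⟨y, ⟨hmono, hnn, hsum⟩, rfl⟩
      have hnn' : ∀ i : Fin (m+1), (0:ℤ) ≤ extLast 0 y i := by
        intro i
        induction i using Fin.lastCases with
        | last => simp
        | cast i' => simpa using hnn i'
      refine ⟨⟨?_, hnn', ?_⟩, by simp⟩
      · intro i j hij
        induction j using Fin.lastCases with
        | last => simpa using hnn' i
        | cast j' =>
          induction i using Fin.lastCases with
          | last =>
            exact absurd (lt_of_le_of_lt hij (Fin.castSucc_lt_last j')) (lt_irrefl _)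
          | cast i' =>
            simp only [extLast_castSucc]
            exact hmono i' j' (by simpa using hij)
      · rw [extLast_sum]; omega
    · rintro ⟨⟨hmono, hnn, hsum⟩, hlast⟩
      refine ⟨Fin.init x, ⟨?_, ?_, ?_⟩, ?_⟩
      · intro i j hij
        simp only [Fin.init]
        exact hmono _ _ (by simpa using hij)
      · intro i; exact hnn _
      · rw [Fin.sum_univ_castSucc] at hsum
        simp only [Fin.init]
        omega
      · rw [← hlast]
        exact (eq_extLast x).symm
  have himg1 : addOne '' {y : Fin (m+1) → ℤ |
      (∀ i j : Fin (m+1), i ≤ j → y j ≤ y i) ∧ (∀ i, 0 ≤ y i) ∧ ∑ i, y i = k - (m+1)} = S1 := by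
    ext x
    simp only [Set.mem_image, Set.mem_setOf_eq, hS1, hS]
    constructor
    · rintro ⟨y, ⟨hmono, hnn, hsum⟩, rfl⟩
      refine ⟨⟨?_, ?_, ?_⟩, ?_⟩
      · intro i j hij
        simp only [addOne_apply]
        have := hmono i j hij; omega
      · intro i; simp only [addOne_apply]; have := hnn i; omega
      · rw [addOne_sum, hsum]; push_cast; ring
      · simp only [addOne_apply]; have := hnn (Fin.last m); omega
    · rintro ⟨⟨hmono, hnn, hsum⟩, hlast⟩
      refine ⟨fun i => x i - 1, ⟨?_, ?_, ?_⟩, ?_⟩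
      · intro i j hij
        simp only
        have := hmono i j hij; omega
      · intro i
        simp only
        have h1 := hmono i (Fin.last m) (Fin.le_last i)
        omega
      · rw [Finset.sum_sub_distrib, hsum]
        push_cast
        simp
      · funext i; simp [addOne]
  have h0card : S0.ncard = Acount m k := by
    rw [← himg0, Set.ncard_image_of_injective _ (extLast_inj 0)]
    rfl
  have h1card : S1.ncard = Acount (m+1) (k - (m+1)) := by
    rw [← himg1, Set.ncard_image_of_injective _ addOne_inj]
    rfl
  have heq : Acount (m+1) k = S.ncard := rfl
  rw [heq, hunion, Set.ncard_union_eq hdisj (hfin.subset (hunion ▸ Set.subset_union_left))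
    (hfin.subset (hunion ▸ Set.subset_union_right)), h0card, h1card]

lemma Bcount_rec (m : ℕ) (k : ℤ) :
    Bcount (m+1) k = Bcount m (k - (m+1)) + Bcount (m+1) (k - (m+1)) := by
  classical
  set S : Set (Fin (m+1) → ℤ) := {x |
    (∀ i j : Fin (m+1), i < j → x j < x i) ∧ (∀ i, 0 < x i) ∧ ∑ i, x i = k} with hS
  set S0 : Set (Fin (m+1) → ℤ) := {x ∈ S | x (Fin.last m) = 1} with hS0
  set S1 : Set (Fin (m+1) → ℤ) := {x ∈ S | 2 ≤ x (Fin.last m)} with hS1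
  have hfin : S.Finite := bset_finite (m+1) k
  have hunion : S = S0 ∪ S1 := by
    ext x
    simp only [hS0, hS1, Set.mem_union, Set.mem_setOf_eq]
    constructor
    · intro hx
      have := hx.2.1 (Fin.last m)
      by_cases h : x (Fin.last m) = 1
      · exact Or.inl ⟨hx, h⟩
      · exact Or.inr ⟨hx, by omega⟩
    · rintro (h | h) <;> exact h.1
  have hdisj : Disjoint S0 S1 := by
    rw [Set.disjoint_left]
    rintro x ⟨-, h0⟩ ⟨-, h1⟩
    omega
  have himg0 : (fun y => extLast 1 (addOne y)) '' {y : Fin m → ℤ |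
      (∀ i j : Fin m, i < j → y j < y i) ∧ (∀ i, 0 < y i) ∧ ∑ i, y i = k - (m+1)} = S0 := by
    ext x
    simp only [Set.mem_image, Set.mem_setOf_eq, hS0, hS]
    constructor
    · rintro ⟨y, ⟨hmono, hpos, hsum⟩, rfl⟩
      refine ⟨⟨?_, ?_, ?_⟩, by simp⟩
      · intro i j hij
        induction j using Fin.lastCases with
        | last =>
          have hi : i < Fin.last m := hij
          induction i using Fin.lastCases with
          | last => exact absurd hi (lt_irrefl _)
          | cast i' =>
            simp only [extLast_castSucc, extLast_last, addOne_apply]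
            have := hpos i'; omega
        | cast j' =>
          induction i using Fin.lastCases with
          | last => exact absurd (lt_trans hij (Fin.castSucc_lt_last j')) (lt_irrefl _)
          | cast i' =>
            simp only [extLast_castSucc, addOne_apply]
            have := hmono i' j' (by simpa using hij); omega
      · intro i
        induction i using Fin.lastCases with
        | last => simp
        | cast i' =>
          simp only [extLast_castSucc, addOne_apply]
          have := hpos i'; omega
      · rw [extLast_sum, addOne_sum, hsum]; push_cast; ring
    · rintro ⟨⟨hmono, hpos, hsum⟩, hlast⟩
      refine ⟨fun i => x (Fin.castSucc i) - 1, ⟨?_, ?_, ?_⟩, ?_⟩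
      · intro i j hij
        simp only
        have := hmono (Fin.castSucc i) (Fin.castSucc j) (by simpa using hij)
        omega
      · intro i
        simp only
        have := hmono (Fin.castSucc i) (Fin.last m) (Fin.castSucc_lt_last i)
        omega
      · rw [Fin.sum_univ_castSucc] at hsum
        rw [Finset.sum_sub_distrib]
        simp only [Finset.sum_const, Finset.card_univ, Fintype.card_fin, nsmul_eq_mul, mul_one]
        omega
      · funext i
        induction i using Fin.lastCases with
        | last => simp [hlast]
        | cast i' => simp
  have himg1 : addOne '' {y : Fin (m+1) → ℤ |
      (∀ i j : Fin (m+1), i < j → y j < y i) ∧ (∀ i, 0 < y i) ∧ ∑ i, y i = k - (m+1)} = S1 := by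
    ext x
    simp only [Set.mem_image, Set.mem_setOf_eq, hS1, hS]
    constructor
    · rintro ⟨y, ⟨hmono, hpos, hsum⟩, rfl⟩
      refine ⟨⟨?_, ?_, ?_⟩, ?_⟩
      · intro i j hij
        simp only [addOne_apply]
        have := hmono i j hij; omega
      · intro i; simp only [addOne_apply]; have := hpos i; omega
      · rw [addOne_sum, hsum]; push_cast; ring
      · simp only [addOne_apply]; have := hpos (Fin.last m); omega
    · rintro ⟨⟨hmono, hpos, hsum⟩, hlast⟩
      refine ⟨fun i => x i - 1, ⟨?_, ?_, ?_⟩, ?_⟩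
      · intro i j hij
        simp only
        have := hmono i j hij; omega
      · intro i
        simp only
        by_cases hi : i = Fin.last m
        · subst hi; omega
        · have : i < Fin.last m := lt_of_le_of_ne (Fin.le_last i) (by simpa using hi)
          have := hmono i (Fin.last m) this
          omega
      · rw [Finset.sum_sub_distrib, hsum]
        push_cast
        simp
      · funext i; simp [addOne]
  have h0card : S0.ncard = Bcount m (k - (m+1)) := by
    have hinj : Function.Injective (fun y : Fin m → ℤ => extLast 1 (addOne y)) :=
      fun a b h => addOne_inj ((extLast_inj 1) h)
    rw [← himg0, Set.ncard_image_of_injective _ hinj]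
    rfl
  have h1card : S1.ncard = Bcount (m+1) (k - (m+1)) := by
    rw [← himg1, Set.ncard_image_of_injective _ addOne_inj]
    rfl
  have heq : Bcount (m+1) k = S.ncard := rfl
  rw [heq, hunion, Set.ncard_union_eq hdisj (hfin.subset (hunion ▸ Set.subset_union_left))
    (hfin.subset (hunion ▸ Set.subset_union_right)), h0card, h1card]

/-- two-sided extension of the partition counting function -/
noncomputable def Tfun (m : ℕ) (n : ℤ) : ℚ :=
  if 0 ≤ n then (Acount m n : ℚ) else (-1)^(m-1) * (Bcount m (-n) : ℚ)

lemma Tfun_one (n : ℤ) : Tfun 1 n = 1 := by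
  unfold Tfun
  split_ifs with h
  · rw [Acount_one h]; norm_num
  · rw [Bcount_one (by omega)]; norm_num

lemma Tfun_rec (m : ℕ) (n : ℤ) :
    Tfun (m+2) n = Tfun (m+2) (n - (m+2)) + Tfun (m+1) n := by
  have hA := Acount_rec (m+1) n
  have hB := Bcount_rec (m+1) ((m+2 : ℤ) - n)
  have hc1 : ((m+1 : ℕ) : ℤ) + 1 = ((m+2 : ℕ) : ℤ) := by push_cast; ring
  unfold Tfun
  rcases le_or_gt 0 (n - (m+2)) with h1 | h1
  · have h0 : (0:ℤ) ≤ n := by push_cast at h1 ⊢; omega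
    rw [if_pos h0, if_pos h1, if_pos h0]
    simp only [show m+1+1 = m+2 from rfl] at hA
    rw [show n - ((m:ℤ)+2) = n - (((m+1:ℕ):ℤ)+1) from by push_cast; ring, hA]
    push_cast
    ring
  · rcases le_or_gt 0 n with h0 | h0
    · rw [if_pos h0, if_neg (by push_cast at h1 ⊢; omega), if_pos h0]
      have hBz : Bcount (m+2) (-(n - ((m:ℤ)+2))) = 0 := by
        have e1 : -(n - ((m:ℤ)+2)) = ((m:ℤ)+2) - n := by ring
        have e2 : ((m:ℤ)+2) - n - (((m+1:ℕ):ℤ)+1) = -n := by push_cast; ring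
        rw [e1]
        have := hB
        rw [show ((m+2:ℤ)) = ((m:ℤ)+2) by push_cast; ring] at this
        rw [e2] at this
        rw [this, Bcount_nonpos (by omega) (by omega), Bcount_nonpos (by omega) (by omega)]
      have hAz : Acount (m+2) (n - (((m+1:ℕ):ℤ)+1)) = 0 :=
        Acount_neg (by push_cast at h1 ⊢; omega)
      rw [hAz] at hA
      push_cast at hA ⊢
      rw [hBz]
      push_cast
      rw [hA]
      ring
    · rw [if_neg (by omega), if_neg (by omega), if_neg (by omega)]
      have e1 : -(n - ((m:ℤ)+2)) = ((m:ℤ)+2) - n := by ring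
      have e2 : ((m:ℤ)+2) - n - (((m+1:ℕ):ℤ)+1) = -n := by push_cast; ring
      rw [show ((m+2:ℤ)) = ((m:ℤ)+2) by push_cast; ring] at hB
      rw [e2] at hB
      rw [e1, hB]
      have hs1 : (m+2) - 1 = m + 1 := by omega
      have hs2 : (m+1) - 1 = m := by omega
      rw [hs1, hs2]
      push_cast
      ring

lemma desc_diff (n : ℕ) (x : ℚ) :
    (descPochhammer ℚ (n+1)).eval (x+1) - (descPochhammer ℚ (n+1)).eval x
      = (n+1) * (descPochhammer ℚ n).eval x := by
  have h1 : (descPochhammer ℚ (n+1)).eval (x+1) = (x+1) * (descPochhammer ℚ n).eval x := by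
    rw [descPochhammer_succ_left]
    simp [Polynomial.eval_comp]
  have h2 := descPochhammer_succ_eval n x
  rw [h1, h2]
  ring

/-- every polynomial has a discrete antiderivative -/
lemma exists_antideriv (P : Polynomial ℚ) :
    ∃ Q : Polynomial ℚ, ∀ x : ℚ, Q.eval (x+1) - Q.eval x = P.eval x := by
  suffices h : ∀ d : ℕ, ∀ P : Polynomial ℚ, P.natDegree ≤ d →
      ∃ Q : Polynomial ℚ, ∀ x : ℚ, Q.eval (x+1) - Q.eval x = P.eval x from
    h P.natDegree P le_rfl
  intro d
  induction d with
  | zero =>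
    intro P hP
    refine ⟨Polynomial.C (P.coeff 0) * Polynomial.X, fun x => ?_⟩
    rw [Polynomial.eq_C_of_natDegree_le_zero hP]
    simp
    ring
  | succ d ih =>
    intro P hP
    set c := P.coeff (d+1) with hc
    set P' := P - Polynomial.C c * descPochhammer ℚ (d+1) with hP'
    have hdeg : P'.natDegree ≤ d := by
      rw [Polynomial.natDegree_le_iff_coeff_eq_zero]
      intro N hN
      rcases Nat.lt_or_ge N (d+2) with h | h
      · have hNeq : N = d + 1 := by omega
        subst hNeq
        simp only [hP', Polynomial.coeff_sub, Polynomial.coeff_C_mul]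
        have hmon : (descPochhammer ℚ (d+1)).coeff (d+1) = 1 := by
          have := monic_descPochhammer ℚ (d+1)
          have hnd := descPochhammer_natDegree (R := ℚ) (d+1)
          rw [Polynomial.Monic.def, Polynomial.leadingCoeff, hnd] at this
          exact this
        rw [hmon, mul_one, ← hc, sub_self]
      · have h1 : P.coeff N = 0 := Polynomial.coeff_eq_zero_of_natDegree_lt (by omega)
        have h2 : (descPochhammer ℚ (d+1)).coeff N = 0 :=
          Polynomial.coeff_eq_zero_of_natDegree_lt (by rw [descPochhammer_natDegree]; omega)
        simp [hP', h1, h2]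
    obtain ⟨Q', hQ'⟩ := ih P' hdeg
    refine ⟨Q' + Polynomial.C (c/(d+2)) * descPochhammer ℚ (d+2), fun x => ?_⟩
    have hd2 : ((d:ℚ)+2) ≠ 0 := by positivity
    have hdd := desc_diff (d+1) x
    simp only [show d+1+1 = d+2 from rfl] at hdd
    push_cast at hdd
    have hPval : P.eval x = P'.eval x + c * (descPochhammer ℚ (d+1)).eval x := by
      simp [hP']
    simp only [Polynomial.eval_add, Polynomial.eval_mul, Polynomial.eval_C]
    rw [hPval, ← hQ' x]
    have hkey : c/((d:ℚ)+2) * (((d:ℚ)+2) * (descPochhammer ℚ (d+1)).eval x)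
        = c * (descPochhammer ℚ (d+1)).eval x := by
      field_simp
    calc Q'.eval (x+1) + c/((d:ℚ)+2) * (descPochhammer ℚ (d+2)).eval (x+1) -
          (Q'.eval x + c/((d:ℚ)+2) * (descPochhammer ℚ (d+2)).eval x)
        = (Q'.eval (x+1) - Q'.eval x) +
          c/((d:ℚ)+2) * ((descPochhammer ℚ (d+2)).eval (x+1) - (descPochhammer ℚ (d+2)).eval x) := by
          ring
      _ = (Q'.eval (x+1) - Q'.eval x) + c/((d:ℚ)+2) * (((d:ℚ)+2) * (descPochhammer ℚ (d+1)).eval x) := by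
          rw [hdd]
          ring
      _ = (Q'.eval (x+1) - Q'.eval x) + c * (descPochhammer ℚ (d+1)).eval x := by rw [hkey]
      _ = _ := by ring

/-- discrete integration: a function on ℤ whose difference is polynomial is polynomial -/
lemma discrete_integration (h : ℤ → ℚ) (P : Polynomial ℚ)
    (hd : ∀ t : ℤ, h (t+1) - h t = P.eval (t:ℚ)) :
    ∃ H : Polynomial ℚ, ∀ t : ℤ, h t = H.eval (t:ℚ) := by
  obtain ⟨Q, hQ⟩ := exists_antideriv P
  have key : ∀ t : ℤ, h t - Q.eval (t:ℚ) = h 0 - Q.eval 0 := by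
    intro t
    induction t using Int.induction_on with
    | zero => norm_num
    | succ k ihk =>
      have h1 := hd k
      have h2 := hQ (k:ℚ)
      push_cast at ihk h1 ⊢
      linarith
    | pred k ihk =>
      have h1 := hd (-(k:ℤ)-1)
      have h2 := hQ ((-(k:ℤ)-1 : ℤ) : ℚ)
      have e : (-(k:ℤ)-1) + 1 = -(k:ℤ) := by ring
      rw [e] at h1
      push_cast at ihk h1 h2 ⊢
      rw [show (-(k:ℚ)-1)+1 = -(k:ℚ) by ring] at h2
      linarith
  refine ⟨Q + Polynomial.C (h 0 - Q.eval 0), fun t => ?_⟩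
  simp only [Polynomial.eval_add, Polynomial.eval_C]
  linarith [key t]

/-- quasipolynomial predicate -/
def IsQP (l : ℕ) (f : ℤ → ℚ) : Prop :=
  ∀ c : ℤ, ∃ q : Polynomial ℚ, ∀ n : ℤ, (l:ℤ) ∣ (n - c) → f n = q.eval (n:ℚ)

lemma IsQP.of_dvd {l l' : ℕ} {f : ℤ → ℚ} (h : l ∣ l') (hf : IsQP l f) : IsQP l' f := by
  intro c
  obtain ⟨q, hq⟩ := hf c
  exact ⟨q, fun n hn => hq n (dvd_trans (Int.natCast_dvd_natCast.mpr h) hn)⟩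

lemma Tfun_telescope (m : ℕ) (N : ℕ) (n : ℤ) :
    Tfun (m+2) n = Tfun (m+2) (n - N*(m+2)) +
      ∑ i ∈ Finset.range N, Tfun (m+1) (n - i*(m+2)) := by
  induction N with
  | zero => simp
  | succ N ih =>
    rw [ih, Finset.sum_range_succ]
    have := Tfun_rec m (n - N*(m+2))
    rw [this]
    have e : n - N*(m+2) - ((m:ℤ)+2) = n - (N+1 : ℕ)*(m+2) := by push_cast; ring
    rw [show ((m:ℤ)+2) = ((m:ℤ)+2) from rfl] at this
    rw [show n - (N:ℤ)*(m+2) - ((m:ℤ)+2) = n - ((N+1 : ℕ):ℤ)*((m:ℤ)+2) from by push_cast; ring]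
    push_cast
    ring

lemma IsQP_step (m : ℕ) (L : ℕ) (hdvd : (m+2) ∣ L) (hLpos : 0 < L)
    (hQP : IsQP L (Tfun (m+1))) : IsQP L (Tfun (m+2)) := by
  intro c
  set N := L / (m+2) with hN
  have hNL : N * (m+2) = L := Nat.div_mul_cancel hdvd
  have hchoice : ∀ i : ℕ, ∃ q : Polynomial ℚ, ∀ n : ℤ,
      (L:ℤ) ∣ (n - (c - i*(m+2))) → Tfun (m+1) n = q.eval (n:ℚ) := fun i => hQP (c - i*(m+2))
  choose q hq using hchoice
  set g : Polynomial ℚ := ∑ i ∈ Finset.range N,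
    (q i).comp (Polynomial.X - Polynomial.C ((i:ℚ)*((m:ℚ)+2))) with hg
  have hdiff : ∀ n : ℤ, (L:ℤ) ∣ (n - c) →
      Tfun (m+2) n - Tfun (m+2) (n - L) = g.eval (n:ℚ) := by
    intro n hn
    have htel := Tfun_telescope m N n
    have hL' : ((N:ℤ))*((m:ℤ)+2) = (L:ℤ) := by
      rw [← hNL]; push_cast; ring
    rw [show (n : ℤ) - (N:ℤ)*((m:ℤ)+2) = n - (L:ℤ) from by rw [hL']] at htel
    have hsum : ∑ i ∈ Finset.range N, Tfun (m+1) (n - i*(m+2)) = g.eval (n:ℚ) := by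
      rw [hg]
      rw [Polynomial.eval_finset_sum]
      apply Finset.sum_congr rfl
      intro i hi
      rw [Polynomial.eval_comp]
      simp only [Polynomial.eval_sub, Polynomial.eval_X, Polynomial.eval_C]
      have harg : ((n - i*(m+2) : ℤ) : ℚ) = (n:ℚ) - (i:ℚ)*((m:ℚ)+2) := by push_cast; ring
      rw [← harg]
      apply hq i
      have e : n - (i:ℤ) * ((m:ℤ) + 2) - (c - (i:ℤ) * ((m:ℤ) + 2)) = n - c := by ring
      rw [e]
      exact hn
    rw [htel, hsum]
    ring
  -- the function t ↦ Tfun (m+2) (c + t*L) has polynomial difference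
  set h : ℤ → ℚ := fun t => Tfun (m+2) (c + t*L) with hh
  set P : Polynomial ℚ := g.comp (Polynomial.C ((c:ℚ) + (L:ℚ)) + Polynomial.C (L:ℚ) * Polynomial.X)
    with hP
  have hdiffP : ∀ t : ℤ, h (t+1) - h t = P.eval (t:ℚ) := by
    intro t
    have h1 := hdiff (c + (t+1)*L) ⟨t+1, by ring⟩
    have e1 : c + (t+1)*(L:ℤ) - L = c + t*L := by ring
    rw [e1] at h1
    rw [hh]
    simp only
    rw [h1, hP, Polynomial.eval_comp]
    simp only [Polynomial.eval_add, Polynomial.eval_mul, Polynomial.eval_C, Polynomial.eval_X]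
    congr 1
    push_cast
    ring
  obtain ⟨H, hH⟩ := discrete_integration h P hdiffP
  refine ⟨H.comp (Polynomial.C (-(c:ℚ)/(L:ℚ)) + Polynomial.C (1/(L:ℚ)) * Polynomial.X),
    fun n hn => ?_⟩
  obtain ⟨t, ht⟩ := hn
  have hn' : n = c + t*L := by rw [mul_comm]; linarith
  have hL0 : ((L:ℚ)) ≠ 0 := by positivity
  rw [hn']
  have := hH t
  rw [hh] at this
  simp only at this
  rw [this, Polynomial.eval_comp]
  simp only [Polynomial.eval_add, Polynomial.eval_mul, Polynomial.eval_C, Polynomial.eval_X]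
  congr 1
  push_cast
  field_simp
  ring

lemma icc_lcm_pos (n : ℕ) : 0 < (Finset.Icc 1 n).lcm id := by
  rcases Nat.eq_zero_or_pos ((Finset.Icc 1 n).lcm id) with h | h
  · rw [Finset.lcm_eq_zero_iff] at h
    simp only [Set.mem_image, Finset.mem_coe, Finset.mem_Icc, id_eq] at h
    obtain ⟨x, hx, hx0⟩ := h
    omega
  · exact h

lemma Tfun_isQP (m : ℕ) : IsQP ((Finset.Icc 1 (m+1)).lcm id) (Tfun (m+1)) := by
  induction m with
  | zero =>
    intro c
    exact ⟨Polynomial.C 1, fun n _ => by rw [Tfun_one]; simp⟩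
  | succ k ih =>
    have hdvd : (k+2) ∣ (Finset.Icc 1 (k+2)).lcm id :=
      Finset.dvd_lcm (by simp [Finset.mem_Icc])
    have hsub : (Finset.Icc 1 (k+1)).lcm id ∣ (Finset.Icc 1 (k+2)).lcm id :=
      Finset.lcm_dvd fun b hb => Finset.dvd_lcm (by simp only [Finset.mem_Icc] at hb ⊢; omega)
    exact IsQP_step k _ hdvd (icc_lcm_pos (k+2)) (ih.of_dvd hsub)

/-- Reciprocity for the restricted partition function: up to sign, the quasipolynomial
`p(·, m)` for partitions into at most `m` parts, evaluated at `-k`, counts partitions of `k`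
into exactly `m` distinct parts. -/
theorem restricted_partition_function_reciprocity
    (m : ℕ) (hm : 0 < m) (L : ℕ) (hL : L = (Finset.Icc 1 m).lcm id)
    (p : ℕ → Polynomial ℚ)
    (hp : ∀ k : ℕ, 0 < k →
      (p (k % L)).eval (k : ℚ) =
        (Set.ncard {x : Fin m → ℤ |
          (∀ i j : Fin m, i ≤ j → x j ≤ x i) ∧ (∀ i, 0 ≤ x i) ∧ ∑ i, x i = (k : ℤ)} : ℚ)) :
    ∀ k : ℕ, 0 < k →
      (-1 : ℚ) ^ (m - 1) * (p ((-(k : ℤ)) % (L : ℤ)).toNat).eval (-(k : ℚ)) =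
        (Set.ncard {x : Fin m → ℤ |
          (∀ i j : Fin m, i < j → x j < x i) ∧ (∀ i, 0 < x i) ∧ ∑ i, x i = (k : ℤ)} : ℚ) := by
  intro k hk
  obtain ⟨m', rfl⟩ : ∃ m', m = m' + 1 := ⟨m - 1, by omega⟩
  have hLpos : 0 < L := hL ▸ icc_lcm_pos (m'+1)
  have hQP : IsQP L (Tfun (m'+1)) := hL ▸ Tfun_isQP m'
  set r : ℕ := ((-(k:ℤ)) % (L:ℤ)).toNat with hrdef
  have hr : (r:ℤ) = (-(k:ℤ)) % (L:ℤ) :=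
    Int.toNat_of_nonneg (Int.emod_nonneg _ (by positivity))
  have hrk : (L:ℤ) ∣ (r:ℤ) - (-(k:ℤ)) := by
    rw [hr, Int.emod_def]
    exact ⟨-((-(k:ℤ))/(L:ℤ)), by ring⟩
  have hrlt : (r:ℤ) < (L:ℤ) := by
    rw [hr]
    exact Int.emod_lt_of_pos _ (by positivity)
  obtain ⟨q, hq⟩ := hQP (-(k:ℤ))
  -- the given polynomial coincides with our quasipolynomial on the residue class
  have hpq : p r = q := by
    apply Polynomial.eq_of_infinite_eval_eq
    apply Set.infinite_of_injective_forall_mem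
      (f := fun j : ℕ => ((r + (j+1)*L : ℕ) : ℚ))
    · intro a b hab
      simp only at hab
      have : (r + (a+1)*L : ℕ) = (r + (b+1)*L : ℕ) := by exact_mod_cast hab
      have := Nat.eq_of_mul_eq_mul_right hLpos (by omega : (a+1)*L = (b+1)*L)
      omega
    · intro j
      set n : ℕ := r + (j+1)*L with hn
      have hnpos : 0 < n := by
        have : 0 < (j+1)*L := Nat.mul_pos (by omega) hLpos
        omega
      have hmod : n % L = r := by
        rw [hn]
        have : r < L := by exact_mod_cast hrlt
        rw [Nat.add_mul_mod_self_right]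
        exact Nat.mod_eq_of_lt this
      have hdvd : (L:ℤ) ∣ (n:ℤ) - (-(k:ℤ)) := by
        have h1 : (n:ℤ) = (r:ℤ) + ((j:ℤ)+1)*(L:ℤ) := by rw [hn]; push_cast; ring
        obtain ⟨t, ht⟩ := hrk
        refine ⟨t + ((j:ℤ)+1), ?_⟩
        rw [h1]
        linarith [ht]
      have h1 := hp n hnpos
      rw [hmod] at h1
      have h2 : Tfun (m'+1) (n:ℤ) = q.eval ((n:ℤ):ℚ) := hq (n:ℤ) hdvd
      have h3 : Tfun (m'+1) (n:ℤ) = (Acount (m'+1) (n:ℤ) : ℚ) := by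
        unfold Tfun
        rw [if_pos (by positivity)]
      simp only [Set.mem_setOf_eq]
      have h4 : (Set.ncard {x : Fin (m'+1) → ℤ |
          (∀ i j : Fin (m'+1), i ≤ j → x j ≤ x i) ∧ (∀ i, 0 ≤ x i) ∧ ∑ i, x i = ((n:ℕ):ℤ)} : ℚ)
          = (Acount (m'+1) (n:ℤ) : ℚ) := rfl
      rw [h1, h4]
      rw [← h3, h2]
      norm_cast
  -- evaluate at -k
  have hqval : q.eval (-(k:ℚ)) = Tfun (m'+1) (-(k:ℤ)) := by
    have := hq (-(k:ℤ)) (by simp)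
    rw [this]
    push_cast
    ring_nf
  have hTval : Tfun (m'+1) (-(k:ℤ)) = (-1:ℚ)^m' * (Bcount (m'+1) (k:ℤ) : ℚ) := by
    unfold Tfun
    rw [if_neg (by omega), show (m'+1) - 1 = m' from rfl, neg_neg]
  have hB : (Set.ncard {x : Fin (m'+1) → ℤ |
      (∀ i j : Fin (m'+1), i < j → x j < x i) ∧ (∀ i, 0 < x i) ∧ ∑ i, x i = (k:ℤ)} : ℚ)
      = (Bcount (m'+1) (k:ℤ) : ℚ) := rfl
  rw [hB, show (m'+1) - 1 = m' from rfl, hpq, hqval, hTval]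
  rw [← mul_assoc, ← mul_pow]
  norm_num
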